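/- Under the same hypotheses (A symmetric PSD with eigenvalues λ₁ > λ₂ ≥ ⋯ ≥ λₙ ≥ 0 and orthonormal eigenvectors u_i; x_{k+1} = ζ_k A x_k + ω_k A² x_k with ζ_k + ω_k λ₁ ≠ 0; ‖x₀‖ = 1, u₁ᵀx₀ ≠ 0; and |ζ_k + ω_k λ_j| ≤ δ |ζ_k + ω_k λ₁| for all j ≥ 2, k ≥ 0, for some δ ∈ [0,1]), the Rayleigh quotients r(x_k) = x_kᵀA x_k / ‖x_k‖² satisfy |r(x_k) − λ₁| ≤ (λ₁ − λₙ) · tan²θ₀ · (λ₂/λ₁)^{2k} · δ^{2k} for all k ≥ 0, where cos θ₀ = |u₁ᵀx₀|. -/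

import Mathlib

open Matrix RealInnerProductSpace

/-- View a plain vector as an element of Euclidean space. -/
def toEuc {m : ℕ} (w : Fin m → ℝ) : EuclideanSpace ℝ (Fin m) := WithLp.toLp 2 w

/-- Under the hypotheses of the Split-Merge convergence theorem, the Rayleigh quotients
`r(x_k) = x_kᵀA x_k/‖x_k‖²` satisfy
`|r(x_k) − λ₁| ≤ (λ₁ − λₙ) tan²θ₀ (λ₂/λ₁)^{2k} δ^{2k}` with `cos θ₀ = |u₁ᵀx₀|`. -/
theorem stmt_18 {n : ℕ} (hn : 2 ≤ n)
    (A : Matrix (Fin n) (Fin n) ℝ) (hsymm : A.IsSymm)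
    (lam : Fin n → ℝ) (u : Fin n → EuclideanSpace ℝ (Fin n))
    (horth : Orthonormal ℝ u)
    (heig : ∀ i, toEuc (A.mulVec (u i)) = lam i • u i)
    (hanti : ∀ i j : Fin n, i ≤ j → lam j ≤ lam i)
    (hnonneg : ∀ i, 0 ≤ lam i)
    (hgap : lam ⟨1, by omega⟩ < lam ⟨0, by omega⟩)
    (ζ ω : ℕ → ℝ)
    (hnz : ∀ k, ζ k + ω k * lam ⟨0, by omega⟩ ≠ 0)
    (x : ℕ → EuclideanSpace ℝ (Fin n))
    (hx0norm : ‖x 0‖ = 1)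
    (hx0 : ⟪u ⟨0, by omega⟩, x 0⟫ ≠ 0)
    (hrec : ∀ k, x (k + 1)
      = ζ k • toEuc (A.mulVec (x k)) + ω k • toEuc (A.mulVec (A.mulVec (x k))))
    (δ : ℝ) (hδ0 : 0 ≤ δ) (hδ1 : δ ≤ 1)
    (hbound : ∀ k, ∀ j : Fin n, j ≠ ⟨0, by omega⟩ →
      |ζ k + ω k * lam j| ≤ δ * |ζ k + ω k * lam ⟨0, by omega⟩|) :
    ∀ k, |(x k ⬝ᵥ A.mulVec (x k)) / ‖x k‖ ^ 2 - lam ⟨0, by omega⟩|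
      ≤ (lam ⟨0, by omega⟩ - lam ⟨n - 1, by omega⟩)
        * (Real.sqrt (1 - |⟪u ⟨0, by omega⟩, x 0⟫| ^ 2) / |⟪u ⟨0, by omega⟩, x 0⟫|) ^ 2
        * (lam ⟨1, by omega⟩ / lam ⟨0, by omega⟩) ^ (2 * k) * δ ^ (2 * k) := by
  set i0 : Fin n := ⟨0, by omega⟩ with hi0def
  set i1 : Fin n := ⟨1, by omega⟩ with hi1def
  set iN : Fin n := ⟨n - 1, by omega⟩ with hiNdef
  have hl2nn : (0:ℝ) ≤ lam i1 := hnonneg _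
  have hl1pos : 0 < lam i0 := lt_of_le_of_lt hl2nn hgap
  have hinner : ∀ a c : EuclideanSpace ℝ (Fin n), ⟪a, c⟫ = (a : Fin n → ℝ) ⬝ᵥ (c : Fin n → ℝ) := by
    intro a c; simp [PiLp.inner_apply, dotProduct, RCLike.inner_apply]; exact Finset.sum_congr rfl fun _ _ => mul_comm _ _
  have hA : ∀ (i : Fin n) (y : Fin n → ℝ),
      ⟪u i, toEuc (A.mulVec y)⟫ = lam i * ⟪u i, toEuc y⟫ := by
    intro i y
    rw [hinner, hinner]
    show (u i) ⬝ᵥ A.mulVec y = lam i * ((u i) ⬝ᵥ y)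
    rw [dotProduct_mulVec]
    have h2 : (u i) ᵥ* A = lam i • (u i : Fin n → ℝ) := by
      rw [← hsymm.eq, ← Matrix.mulVec_transpose, Matrix.transpose_transpose]
      exact congrArg WithLp.ofLp (heig i)
    rw [h2, smul_dotProduct]
    rfl
  have : Nonempty (Fin n) := ⟨i0⟩
  have hcard : Fintype.card (Fin n) = Module.finrank ℝ (EuclideanSpace ℝ (Fin n)) := by simp
  let B := basisOfLinearIndependentOfCardEqFinrank horth.linearIndependent hcard
  have hBu : ⇑B = u := coe_basisOfLinearIndependentOfCardEqFinrank _ _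
  let b : OrthonormalBasis (Fin n) ℝ (EuclideanSpace ℝ (Fin n)) :=
    B.toOrthonormalBasis (by rwa [hBu])
  have hbu : ⇑b = u := by rw [Module.Basis.coe_toOrthonormalBasis, hBu]
  have hpar : ∀ y z : EuclideanSpace ℝ (Fin n),
      ⟪y, z⟫ = ∑ i, ⟪u i, y⟫ * ⟪u i, z⟫ := by
    intro y z
    rw [← b.sum_inner_mul_inner y z]
    refine Finset.sum_congr rfl fun i _ => ?_
    rw [hbu, real_inner_comm y (u i)]
  -- coefficient recurrence
  have hcrec : ∀ (i : Fin n) (k : ℕ),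
      ⟪u i, x (k + 1)⟫ = lam i * (ζ k + ω k * lam i) * ⟪u i, x k⟫ := by
    intro i k
    rw [hrec k, inner_add_right, real_inner_smul_right, real_inner_smul_right]
    rw [hA i (A.mulVec (x k)), hA i (x k)]
    simp only [toEuc, WithLp.toLp_ofLp]
    ring
  -- c0 never vanishes
  have hc0 : ∀ k, ⟪u i0, x k⟫ ≠ 0 := by
    intro k
    induction k with
    | zero => exact hx0
    | succ k ih =>
      rw [hcrec i0 k]
      exact mul_ne_zero (mul_ne_zero hl1pos.ne' (hnz k)) ih
  -- ratio decay
  have hq : ∀ i : Fin n, i ≠ i0 → ∀ k : ℕ,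
      |⟪u i, x k⟫ / ⟪u i0, x k⟫|
        ≤ (lam i1 * δ / lam i0) ^ k * |⟪u i, x 0⟫ / ⟪u i0, x 0⟫| := by
    intro i hi k
    have h1i : i1 ≤ i := by
      have : (i : ℕ) ≠ 0 := fun h => hi (Fin.ext h)
      rw [Fin.le_def]
      simp only [hi1def]
      omega
    induction k with
    | zero => simp
    | succ k ih =>
      have hz := hnz k
      have hratio : ⟪u i, x (k + 1)⟫ / ⟪u i0, x (k + 1)⟫
          = lam i * (ζ k + ω k * lam i) / (lam i0 * (ζ k + ω k * lam i0))
            * (⟪u i, x k⟫ / ⟪u i0, x k⟫) := by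
        rw [hcrec i k, hcrec i0 k, mul_div_mul_comm]
      have hfac : |lam i * (ζ k + ω k * lam i) / (lam i0 * (ζ k + ω k * lam i0))|
          ≤ lam i1 * δ / lam i0 := by
        rw [abs_div, abs_mul, abs_mul, abs_of_pos hl1pos]
        have hnum : |lam i| * |ζ k + ω k * lam i|
            ≤ (lam i1 * δ) * |ζ k + ω k * lam i0| := by
          have hli : |lam i| ≤ lam i1 := by
            rw [abs_of_nonneg (hnonneg i)]
            exact hanti i1 i h1i
          calc |lam i| * |ζ k + ω k * lam i|
              ≤ lam i1 * (δ * |ζ k + ω k * lam i0|) :=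
                mul_le_mul hli (hbound k i hi) (abs_nonneg _) hl2nn
            _ = (lam i1 * δ) * |ζ k + ω k * lam i0| := by ring
        calc |lam i| * |ζ k + ω k * lam i| / (lam i0 * |ζ k + ω k * lam i0|)
            ≤ (lam i1 * δ) * |ζ k + ω k * lam i0| / (lam i0 * |ζ k + ω k * lam i0|) := by
              exact div_le_div_of_nonneg_right hnum (mul_nonneg hl1pos.le (abs_nonneg _))
          _ = lam i1 * δ / lam i0 :=
              mul_div_mul_right _ _ (abs_ne_zero.mpr hz)
      calc |⟪u i, x (k + 1)⟫ / ⟪u i0, x (k + 1)⟫|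
          = |lam i * (ζ k + ω k * lam i) / (lam i0 * (ζ k + ω k * lam i0))|
            * |⟪u i, x k⟫ / ⟪u i0, x k⟫| := by rw [hratio, abs_mul]
        _ ≤ (lam i1 * δ / lam i0) * ((lam i1 * δ / lam i0) ^ k * |⟪u i, x 0⟫ / ⟪u i0, x 0⟫|) :=
            mul_le_mul hfac ih (abs_nonneg _)
              (div_nonneg (mul_nonneg hl2nn hδ0) hl1pos.le)
        _ = (lam i1 * δ / lam i0) ^ (k + 1) * |⟪u i, x 0⟫ / ⟪u i0, x 0⟫| := by ring
  -- Parseval consequences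
  have hnorm : ∀ k, ‖x k‖ ^ 2 = ∑ i, ⟪u i, x k⟫ ^ 2 := by
    intro k
    rw [← real_inner_self_eq_norm_sq, hpar]
    exact Finset.sum_congr rfl fun i _ => (sq _).symm
  have hS : ∀ k, x k ⬝ᵥ A.mulVec (x k) = ∑ i, lam i * ⟪u i, x k⟫ ^ 2 := by
    intro k
    calc x k ⬝ᵥ A.mulVec (x k) = ⟪x k, toEuc (A.mulVec (x k))⟫ :=
          (hinner (x k) (toEuc (A.mulVec (x k)))).symm
      _ = ∑ i, ⟪u i, x k⟫ * ⟪u i, toEuc (A.mulVec (x k))⟫ := hpar _ _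
      _ = ∑ i, lam i * ⟪u i, x k⟫ ^ 2 := by
          refine Finset.sum_congr rfl fun i _ => ?_
          rw [hA i (x k)]
          simp only [toEuc, WithLp.toLp_ofLp]
          ring
  have hi0le : ∀ i : Fin n, i0 ≤ i := fun i => by
    rw [Fin.le_def]; exact Nat.zero_le _
  have hiNge : ∀ i : Fin n, i ≤ iN := fun i => by
    rw [Fin.le_def]
    show (i : ℕ) ≤ n - 1
    have := i.isLt
    omega
  -- main argument
  intro k
  have hck0 := hc0 k
  have hc0sqpos : 0 < ⟪u i0, x k⟫ ^ 2 :=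
    lt_of_le_of_ne (sq_nonneg _) (Ne.symm (pow_ne_zero 2 hck0))
  have hle_sum : ⟪u i0, x k⟫ ^ 2 ≤ ∑ i, ⟪u i, x k⟫ ^ 2 :=
    Finset.single_le_sum (f := fun i => ⟪u i, x k⟫ ^ 2) (fun i _ => sq_nonneg _)
      (Finset.mem_univ i0)
  have hNpos : 0 < ∑ i, ⟪u i, x k⟫ ^ 2 := lt_of_lt_of_le hc0sqpos hle_sum
  have hSle : ∑ i, lam i * ⟪u i, x k⟫ ^ 2 ≤ lam i0 * ∑ i, ⟪u i, x k⟫ ^ 2 := by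
    rw [Finset.mul_sum]
    exact Finset.sum_le_sum fun i _ =>
      mul_le_mul_of_nonneg_right (hanti i0 i (hi0le i)) (sq_nonneg _)
  have hgapN : 0 ≤ lam i0 - lam iN := sub_nonneg.mpr (hanti i0 iN (hi0le iN))
  have habs : |(∑ i, lam i * ⟪u i, x k⟫ ^ 2) / (∑ i, ⟪u i, x k⟫ ^ 2) - lam i0|
      = (lam i0 * (∑ i, ⟪u i, x k⟫ ^ 2) - ∑ i, lam i * ⟪u i, x k⟫ ^ 2)
        / (∑ i, ⟪u i, x k⟫ ^ 2) := by
    have h1 : (∑ i, lam i * ⟪u i, x k⟫ ^ 2) / (∑ i, ⟪u i, x k⟫ ^ 2) - lam i0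
        = ((∑ i, lam i * ⟪u i, x k⟫ ^ 2) - lam i0 * (∑ i, ⟪u i, x k⟫ ^ 2))
          / (∑ i, ⟪u i, x k⟫ ^ 2) := by
      rw [eq_div_iff hNpos.ne', sub_mul, div_mul_cancel₀ _ hNpos.ne']
    rw [h1, abs_div, abs_of_nonpos (sub_nonpos.mpr hSle), abs_of_pos hNpos, neg_sub]
  have hnum_eq : lam i0 * (∑ i, ⟪u i, x k⟫ ^ 2) - ∑ i, lam i * ⟪u i, x k⟫ ^ 2
      = ∑ i ∈ Finset.univ.erase i0, (lam i0 - lam i) * ⟪u i, x k⟫ ^ 2 := by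
    rw [Finset.mul_sum, ← Finset.sum_sub_distrib]
    rw [← Finset.sum_erase_add _ _ (Finset.mem_univ i0)]
    simp only [sub_self, zero_mul, mul_zero]
    rw [add_zero]
    exact Finset.sum_congr rfl fun i _ => by ring
  have h2 : ∑ i ∈ Finset.univ.erase i0, (lam i0 - lam i) * ⟪u i, x k⟫ ^ 2
      ≤ (lam i0 - lam iN) * ∑ i ∈ Finset.univ.erase i0, ⟪u i, x k⟫ ^ 2 := by
    rw [Finset.mul_sum]
    refine Finset.sum_le_sum fun i _ => ?_
    have : lam iN ≤ lam i := hanti i iN (hiNge i)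
    exact mul_le_mul_of_nonneg_right (by linarith) (sq_nonneg _)
  have h2nn : (0:ℝ) ≤ ∑ i ∈ Finset.univ.erase i0, ⟪u i, x k⟫ ^ 2 :=
    Finset.sum_nonneg fun i _ => sq_nonneg _
  -- term-wise ratio bound squared
  have hterm : ∀ i ∈ Finset.univ.erase i0,
      (⟪u i, x k⟫ / ⟪u i0, x k⟫) ^ 2
        ≤ ((lam i1 * δ / lam i0) ^ k) ^ 2 * (⟪u i, x 0⟫ / ⟪u i0, x 0⟫) ^ 2 := by
    intro i hi
    have hine : i ≠ i0 := Finset.ne_of_mem_erase hi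
    calc (⟪u i, x k⟫ / ⟪u i0, x k⟫) ^ 2
        = |⟪u i, x k⟫ / ⟪u i0, x k⟫| ^ 2 := (sq_abs _).symm
      _ ≤ ((lam i1 * δ / lam i0) ^ k * |⟪u i, x 0⟫ / ⟪u i0, x 0⟫|) ^ 2 :=
          pow_le_pow_left₀ (abs_nonneg _) (hq i hine k) 2
      _ = ((lam i1 * δ / lam i0) ^ k) ^ 2 * (⟪u i, x 0⟫ / ⟪u i0, x 0⟫) ^ 2 := by
          rw [mul_pow, sq_abs]
  have hsum0 : ∑ i ∈ Finset.univ.erase i0, ⟪u i, x 0⟫ ^ 2 = 1 - ⟪u i0, x 0⟫ ^ 2 := by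
    have h := hnorm 0
    rw [hx0norm, one_pow] at h
    have h' : ∑ i ∈ Finset.univ.erase i0, ⟪u i, x 0⟫ ^ 2 + ⟪u i0, x 0⟫ ^ 2
        = ∑ i, ⟪u i, x 0⟫ ^ 2 :=
      Finset.sum_erase_add Finset.univ _ (Finset.mem_univ i0)
    linarith
  have hc00le1 : ⟪u i0, x 0⟫ ^ 2 ≤ 1 := by
    have h := hnorm 0
    rw [hx0norm, one_pow] at h
    rw [h]
    exact Finset.single_le_sum (f := fun i => ⟪u i, x 0⟫ ^ 2) (fun i _ => sq_nonneg _)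
      (Finset.mem_univ i0)
  have htan : (Real.sqrt (1 - |⟪u i0, x 0⟫| ^ 2) / |⟪u i0, x 0⟫|) ^ 2
      = (1 - ⟪u i0, x 0⟫ ^ 2) / ⟪u i0, x 0⟫ ^ 2 := by
    rw [div_pow, Real.sq_sqrt (by rw [sq_abs]; linarith), sq_abs]
  have hpowid : ((lam i1 * δ / lam i0) ^ k) ^ 2
      = (lam i1 / lam i0) ^ (2 * k) * δ ^ (2 * k) := by
    rw [← pow_mul, Nat.mul_comm k 2,
      show lam i1 * δ / lam i0 = lam i1 / lam i0 * δ from by ring, mul_pow]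
  have hpownn : (0:ℝ) ≤ ((lam i1 * δ / lam i0) ^ k) ^ 2 := sq_nonneg _
  rw [hS k, hnorm k, habs, hnum_eq]
  calc (∑ i ∈ Finset.univ.erase i0, (lam i0 - lam i) * ⟪u i, x k⟫ ^ 2)
        / (∑ i, ⟪u i, x k⟫ ^ 2)
      ≤ ((lam i0 - lam iN) * ∑ i ∈ Finset.univ.erase i0, ⟪u i, x k⟫ ^ 2)
        / (∑ i, ⟪u i, x k⟫ ^ 2) := div_le_div_of_nonneg_right h2 hNpos.le
    _ ≤ ((lam i0 - lam iN) * ∑ i ∈ Finset.univ.erase i0, ⟪u i, x k⟫ ^ 2)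
        / ⟪u i0, x k⟫ ^ 2 :=
        div_le_div_of_nonneg_left (mul_nonneg hgapN h2nn) hc0sqpos hle_sum
    _ = (lam i0 - lam iN) * ∑ i ∈ Finset.univ.erase i0, (⟪u i, x k⟫ / ⟪u i0, x k⟫) ^ 2 := by
        rw [mul_div_assoc, Finset.sum_div]
        exact congrArg _ (Finset.sum_congr rfl fun i _ => (div_pow _ _ _).symm)
    _ ≤ (lam i0 - lam iN) * ∑ i ∈ Finset.univ.erase i0,
          ((lam i1 * δ / lam i0) ^ k) ^ 2 * (⟪u i, x 0⟫ / ⟪u i0, x 0⟫) ^ 2 :=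
        mul_le_mul_of_nonneg_left (Finset.sum_le_sum hterm) hgapN
    _ = (lam i0 - lam iN) * (((lam i1 * δ / lam i0) ^ k) ^ 2
          * ((1 - ⟪u i0, x 0⟫ ^ 2) / ⟪u i0, x 0⟫ ^ 2)) := by
        rw [← Finset.mul_sum]
        congr 2
        rw [show ∀ s : Finset (Fin n), (∑ i ∈ s, (⟪u i, x 0⟫ / ⟪u i0, x 0⟫) ^ 2)
            = (∑ i ∈ s, ⟪u i, x 0⟫ ^ 2) / ⟪u i0, x 0⟫ ^ 2 from fun s => by
          rw [Finset.sum_div]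
          exact Finset.sum_congr rfl fun i _ => div_pow _ _ _]
        rw [hsum0]
    _ = (lam i0 - lam iN)
        * (Real.sqrt (1 - |⟪u i0, x 0⟫| ^ 2) / |⟪u i0, x 0⟫|) ^ 2
        * (lam i1 / lam i0) ^ (2 * k) * δ ^ (2 * k) := by
        rw [htan, hpowid]
        ring
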